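/- Let Φ be a K₁×K₁ positive semidefinite diagonal matrix and C a K₀×K₁ real matrix with K₀ ≤ K₁ and C C^T = I_{K₀}. Then ln det((C Φ C^T)²) ≤ ln det(C Φ² C^T), i.e., det(C Φ C^T)² ≤ det(C Φ² C^T). -/

import Mathlib

open Matrix

-- auxiliary lemma 1: PSD det nonneg
lemma psd_det_nonneg {n : Type*} [Fintype n] [DecidableEq n] {B : Matrix n n ℝ}
    (hB : B.PosSemidef) : 0 ≤ B.det := by
  exact hB.det_nonneg

-- auxiliary lemma 2: M - 1 PSD → 1 ≤ det M
lemma one_le_det_of_psd_sub_one {n : Type*} [Fintype n] [DecidableEq n] {M : Matrix n n ℝ}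
    (h1 : (M - 1).PosSemidef) : 1 ≤ M.det := by
  have hM : M.PosSemidef := by simpa using h1.add Matrix.PosSemidef.one
  have hdet : M.det = ∏ i, hM.1.eigenvalues i := by
    simpa using hM.1.det_eq_prod_eigenvalues
  rw [hdet]
  have key : ∀ i, 1 ≤ hM.1.eigenvalues i := by
    intro i
    have hv := hM.1.eigenvalues_eq i
    set v := ⇑(hM.1.eigenvectorBasis i) with hvdef
    have hnorm : dotProduct (star v) v = 1 := by
      have h2 : ‖hM.1.eigenvectorBasis i‖ = 1 := hM.1.eigenvectorBasis.orthonormal.1 i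
      have h3 : (inner ℝ (hM.1.eigenvectorBasis i) (hM.1.eigenvectorBasis i) : ℝ) = 1 := by
        rw [real_inner_self_eq_norm_mul_norm, h2]; norm_num
      rw [EuclideanSpace.inner_eq_star_dotProduct, dotProduct_comm] at h3
      exact h3
    have hq := h1.dotProduct_mulVec_nonneg v
    rw [Matrix.sub_mulVec, dotProduct_sub, Matrix.one_mulVec] at hq
    rw [hnorm] at hq
    simp only [RCLike.re_to_real] at hv
    linarith
  calc (1:ℝ) = ∏ _i : n, 1 := by simp
    _ ≤ ∏ i, hM.1.eigenvalues i :=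
        Finset.prod_le_prod (by simp) (fun i _ => key i)

-- auxiliary lemma 3: determinant monotone on PSD order
open scoped MatrixOrder in
lemma det_mono_psd {n : Type*} [Fintype n] [DecidableEq n] {A B : Matrix n n ℝ}
    (hB : B.PosSemidef) (hAB : (A - B).PosSemidef) : B.det ≤ A.det := by
  have hA : A.PosSemidef := by simpa using hAB.add hB
  by_cases hd : B.det = 0
  · rw [hd]; exact psd_det_nonneg hA
  · set S := CFC.sqrt B with hSdef
    have hS : S.PosSemidef := (CFC.sqrt_nonneg B).posSemidef
    have hSS : S * S = B := CFC.sqrt_mul_sqrt_self B hB.nonneg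
    have hSdet : S.det * S.det = B.det := by rw [← Matrix.det_mul, hSS]
    clear_value S
    have hSu : IsUnit S.det := by
      refine isUnit_iff_ne_zero.mpr fun h => hd ?_
      rw [← hSdet, h, zero_mul]
    have hSinv : (S⁻¹).PosSemidef := hS.inv
    set M := S⁻¹ * A * S⁻¹ with hMdef
    clear_value M
    have h1 : S⁻¹ * B * S⁻¹ = 1 := by
      rw [← hSS, ← Matrix.mul_assoc, Matrix.nonsing_inv_mul _ hSu, Matrix.one_mul,
        Matrix.mul_nonsing_inv _ hSu]
    have hMB : M - 1 = S⁻¹ * (A - B) * S⁻¹ := by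
      rw [Matrix.mul_sub, Matrix.sub_mul, h1, hMdef]
    have hM1 : (M - 1).PosSemidef := by
      rw [hMB]
      have := hAB.mul_mul_conjTranspose_same S⁻¹
      rwa [hSinv.1] at this
    have hMd : 1 ≤ M.det := one_le_det_of_psd_sub_one hM1
    have hAe : S * M * S = A := by
      rw [hMdef, Matrix.mul_assoc _ _ S, Matrix.nonsing_inv_mul_cancel_right _ _ hSu,
        Matrix.mul_nonsing_inv_cancel_left _ _ hSu]
    have hBd : 0 < B.det := lt_of_le_of_ne (psd_det_nonneg hB) (Ne.symm hd)
    calc B.det = B.det * 1 := (mul_one _).symm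
      _ ≤ B.det * M.det := by nlinarith
      _ = A.det := by rw [← hAe, Matrix.det_mul, Matrix.det_mul, ← hSdet]; ring

/-- For a nonnegative diagonal `Φ` and `C` with orthonormal rows (`C Cᵀ = I`,
`K₀ ≤ K₁`): `det(C Φ Cᵀ)² ≤ det(C Φ² Cᵀ)`. -/
theorem det_sq_le_det_of_sq
    {K₀ K₁ : ℕ} (hK : K₀ ≤ K₁)
    (φ : Fin K₁ → ℝ) (hφ : ∀ k, 0 ≤ φ k)
    (C : Matrix (Fin K₀) (Fin K₁) ℝ) (hC : C * Cᵀ = 1) :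
    (C * Matrix.diagonal φ * Cᵀ).det ^ 2
      ≤ (C * Matrix.diagonal (fun k => φ k ^ 2) * Cᵀ).det := by
  set Φ := Matrix.diagonal φ with hΦdef
  set Φ2 := Matrix.diagonal (fun k => φ k ^ 2) with hΦ2def
  set P := (1 : Matrix (Fin K₁) (Fin K₁) ℝ) - Cᵀ * C with hPdef
  have hCt : Cᴴ = Cᵀ := conjTranspose_eq_transpose_of_trivial C
  have hΦt : Φᵀ = Φ := Matrix.diagonal_transpose φ
  have hΦΦ : Φ * Φ = Φ2 := by
    rw [hΦdef, hΦ2def, Matrix.diagonal_mul_diagonal]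
    simp [sq]
  have hPt : Pᵀ = P := by
    rw [hPdef, Matrix.transpose_sub, Matrix.transpose_one, Matrix.transpose_mul,
      Matrix.transpose_transpose]
  have hPP : P * P = P := by
    have h4 : Cᵀ * C * (Cᵀ * C) = Cᵀ * C := by
      rw [Matrix.mul_assoc, ← Matrix.mul_assoc C, hC, Matrix.one_mul]
    rw [hPdef, Matrix.mul_sub, Matrix.mul_one, Matrix.sub_mul, Matrix.one_mul, h4]
    abel
  -- positive semidefiniteness facts
  have hΦpsd : Φ.PosSemidef := Matrix.posSemidef_diagonal_iff.mpr hφ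
  have hN : (C * Φ * Cᵀ).PosSemidef := by
    have := hΦpsd.mul_mul_conjTranspose_same C
    rwa [hCt] at this
  have hNN : ((C * Φ * Cᵀ) * (C * Φ * Cᵀ)).PosSemidef := by
    rw [← pow_two]; exact hN.pow 2
  -- the key algebraic identity
  have key : C * Φ2 * Cᵀ - (C * Φ * Cᵀ) * (C * Φ * Cᵀ) = (C * Φ * P) * (C * Φ * P)ᵀ := by
    have hXt : (C * Φ * P)ᵀ = P * (Φ * Cᵀ) := by
      rw [Matrix.transpose_mul, Matrix.transpose_mul, hPt, hΦt]
    rw [hXt, ← Matrix.mul_assoc (C * Φ * P) P, Matrix.mul_assoc (C * Φ) P P, hPP]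
    rw [hPdef, Matrix.mul_sub (C * Φ), Matrix.mul_one, Matrix.sub_mul]
    have h5 : Φ * (Φ * Cᵀ) = Φ2 * Cᵀ := by rw [← Matrix.mul_assoc, hΦΦ]
    congr 1
    · simp only [Matrix.mul_assoc, h5]
    · simp only [Matrix.mul_assoc]
  have hsub : (C * Φ2 * Cᵀ - (C * Φ * Cᵀ) * (C * Φ * Cᵀ)).PosSemidef := by
    rw [key]
    have := Matrix.posSemidef_self_mul_conjTranspose (C * Φ * P)
    rwa [conjTranspose_eq_transpose_of_trivial] at this
  have hmono := det_mono_psd hNN hsub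
  rwa [Matrix.det_mul, ← pow_two] at hmono
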